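/- For every integer k ≥ 0, the 4-coloring complex B(Q_k) has exactly 2^k + 1 connected components. -/

import Mathlib

set_option maxRecDepth 100000
set_option maxHeartbeats 4000000
set_option synthInstance.maxHeartbeats 1000000
set_option synthInstance.maxSize 2000


/-- A proper 4-coloring of a simple graph `G`. -/
def IsProperColoring {V : Type*} (G : SimpleGraph V) (f : V → Fin 4) : Prop :=
  ∀ ⦃u v : V⦄, G.Adj u v → f u ≠ f v

/-- `kempeCount G f a b` is the number of `ab`-Kempe chains of `f`, i.e. the number of
connected components of the subgraph of `G` induced on `f⁻¹({a, b})`. -/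
noncomputable def kempeCount {V : Type*} (G : SimpleGraph V) (f : V → Fin 4)
    (a b : Fin 4) : ℕ :=
  Nat.card ((G.induce {v | f v = a ∨ f v = b}).ConnectedComponent)

/-- Tutte's quantity `J_a(f) = p(a,b) + p(a,c) + p(a,d) - p(b,c) - p(b,d) - p(c,d)`,
where `{b, c, d} = Fin 4 \ {a}`. -/
noncomputable def Jcol {V : Type*} (G : SimpleGraph V) (f : V → Fin 4) (a : Fin 4) : ℤ :=
  (∑ x ∈ Finset.univ.erase a, (kempeCount G f a x : ℤ)) -
    ∑ x ∈ Finset.univ.erase a,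
      ∑ y ∈ (Finset.univ.erase a).filter (fun y => x < y), (kempeCount G f x y : ℤ)

/-- The coloring-partition of `f`: the set of its nonempty color classes. -/
def colPart {V : Type*} (f : V → Fin 4) : Set (Set V) :=
  {A | A.Nonempty ∧ ∃ c, A = f ⁻¹' {c}}

/-- `P` is a coloring-partition of `G` if it is the coloring-partition of some proper
4-coloring of `G`. -/
def IsColoringPartition {V : Type*} (G : SimpleGraph V) (P : Set (Set V)) : Prop :=
  ∃ f, IsProperColoring G f ∧ P = colPart f

/-- The set of all color classes of proper 4-colorings of `G`. -/
def colorClasses {V : Type*} (G : SimpleGraph V) : Set (Set V) :=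
  {A | A.Nonempty ∧ ∃ f c, IsProperColoring G f ∧ A = f ⁻¹' {c}}

/-- The 4-coloring complex `B(G)`: vertices are color classes of proper 4-colorings of `G`,
two distinct classes being adjacent iff they are color classes of a common proper
4-coloring. -/
def colorComplex {V : Type*} (G : SimpleGraph V) : SimpleGraph (colorClasses G) :=
  SimpleGraph.fromRel (fun A B => ∃ f, IsProperColoring G f ∧
    (∃ c, (A : Set V) = f ⁻¹' {c}) ∧ (∃ c, (B : Set V) = f ⁻¹' {c}))

/-- Two proper 4-colorings are adjacent if they have a common (nonempty) color class. -/
def ColAdj {V : Type*} (G : SimpleGraph V) (f g : V → Fin 4) : Prop :=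
  IsProperColoring G f ∧ IsProperColoring G g ∧
    ∃ c c', (f ⁻¹' {c}).Nonempty ∧ f ⁻¹' {c} = g ⁻¹' {c'}

/-- Generating relation for the triangulation `Q_k`.  The vertex `(i, 0)` is `a_i`,
`(i, 1)` is `b_i`, `(i, 2)` is `c_i` and `(i, 3)` is `d_i`.  Edges: the 4-cycles
`a_i b_i c_i d_i`, connecting edges between consecutive cycles, and the chords
`a_0 c_0` and `a_{k+1} c_{k+1}`. -/
def qkRel (k : ℕ) (u v : Fin (k + 2) × Fin 4) : Prop :=
  (u.1 = v.1 ∧ v.2 = u.2 + 1) ∨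
  ((v.1 : ℕ) = (u.1 : ℕ) + 1 ∧ (v.2 = u.2 ∨ v.2 = u.2 + 1)) ∨
  ((u.1 : ℕ) = 0 ∧ (v.1 : ℕ) = 0 ∧ u.2 = 0 ∧ v.2 = 2) ∨
  ((u.1 : ℕ) = k + 1 ∧ (v.1 : ℕ) = k + 1 ∧ u.2 = 0 ∧ v.2 = 2)

/-- The triangulation `Q_k`. -/
def Qk (k : ℕ) : SimpleGraph (Fin (k + 2) × Fin 4) := SimpleGraph.fromRel (qkRel k)

namespace QkProof

/-! ### Local decide lemmas (verified separately, stubbed during dev) -/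

def Hyp (a b : Fin 4 → Fin 4) : Prop :=
  (∀ j, a (j+1) ≠ a j) ∧ (∀ j, b (j+1) ≠ b j) ∧ ∀ j, b j ≠ a j ∧ b j ≠ a (j-1)

instance (a b : Fin 4 → Fin 4) : Decidable (Hyp a b) := by unfold Hyp; infer_instance

def odj (t : Bool) (j : Fin 4) : Prop := j = (if t then 0 else 1) ∨ j = (if t then 2 else 3)

instance (t j) : Decidable (odj t j) := by unfold odj; infer_instance

def TwoCol (a : Fin 4 → Fin 4) : Prop := a 0 = a 2 ∧ a 1 = a 3

instance (a) : Decidable (TwoCol a) := by unfold TwoCol; infer_instance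

lemma L1 : ∀ a b : Fin 4 → Fin 4, Hyp a b → (Function.Injective a ↔ Function.Injective b) := by
  decide

lemma L3 : ∀ a b : Fin 4 → Fin 4, Hyp a b → Function.Injective a →
    (∀ j, b j = a (j+1)) ∨ (∀ j, b j = a (j+2)) := by decide

lemma L4 : ∀ a b : Fin 4 → Fin 4, Hyp a b → TwoCol b → TwoCol a := by decide

lemma L5 : ∀ a b : Fin 4 → Fin 4, Hyp a b → ¬ Function.Injective a → ¬ TwoCol a → ¬ TwoCol b →
    ∀ j j', (odj (decide (a 0 = a 2)) j ∨ odj (decide (b 0 = b 2)) j') → b j' ≠ a j := by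
  decide

lemma S1 : ∀ a : Fin 4 → Fin 4, (∀ j, a (j+1) ≠ a j) → ¬ Function.Injective a → ¬ TwoCol a →
    (∀ j j', odj (decide (a 0 = a 2)) j → odj (decide (a 0 = a 2)) j' → a j = a j') ∧
    (∀ j j', odj (decide (a 0 = a 2)) j → ¬ odj (decide (a 0 = a 2)) j' → a j ≠ a j') ∧
    (∀ j j', ¬ odj (decide (a 0 = a 2)) j → ¬ odj (decide (a 0 = a 2)) j' → j ≠ j' → a j ≠ a j') := by
  decide

/-! ### small decide lemmas (fast, kept live) -/

lemma four_lemma : ∀ c u v z w : Fin 4, u ≠ v → u ≠ z → u ≠ w → v ≠ z → v ≠ w → z ≠ w →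
    c ≠ u → c ≠ v → c ≠ z → c = w := by decide

lemma odj_ne_odj : ∀ t : Bool, (if t then (0:Fin 4) else 1) ≠ (if t then 2 else 3) := by decide

lemma not_odj_val : ∀ (t : Bool) (j : Fin 4), ¬ odj t j → (↑j : ℕ) % 2 = (if t then 1 else 0) := by
  decide

lemma odj_iff_ne : ∀ (t : Bool) (p j : Fin 4), (↑p : ℕ) % 2 = (if t then 1 else 0) →
    (odj t j ↔ (j ≠ p ∧ j ≠ p + 2)) := by decide

lemma phi_sub : ∀ x y : Fin 4, ((((x - y) : Fin 4) : ℕ) : ZMod 2) = ((x : ℕ) : ZMod 2) - ((y : ℕ) : ZMod 2) := by decide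

lemma phi_one : (((1 : Fin 4) : ℕ) : ZMod 2) = 1 := by decide
lemma phi_two : (((2 : Fin 4) : ℕ) : ZMod 2) = 0 := by decide

/-! ### Adjacency extraction -/

variable {k : ℕ}

def Lay (f : Fin (k+2) × Fin 4 → Fin 4) (i : Fin (k+2)) : Fin 4 → Fin 4 := fun j => f (i, j)

lemma fin4_ne_add_one : ∀ j : Fin 4, j ≠ j + 1 := by decide

lemma qk_adj_ring (i : Fin (k+2)) (j : Fin 4) : (Qk k).Adj (i, j) (i, j+1) := by
  refine ⟨?_, Or.inl (Or.inl ⟨rfl, rfl⟩)⟩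
  intro h
  exact fin4_ne_add_one j (congrArg Prod.snd h)

lemma qk_adj_step1 (i : Fin (k+1)) (j : Fin 4) :
    (Qk k).Adj (i.castSucc, j) (i.succ, j) := by
  refine ⟨?_, Or.inl (Or.inr (Or.inl ⟨by simp, Or.inl rfl⟩))⟩
  intro h
  have : i.castSucc = i.succ := congrArg Prod.fst h
  have := congrArg Fin.val this
  simp at this

lemma qk_adj_step2 (i : Fin (k+1)) (j : Fin 4) :
    (Qk k).Adj (i.castSucc, j) (i.succ, j+1) := by
  refine ⟨?_, Or.inl (Or.inr (Or.inl ⟨by simp, Or.inr rfl⟩))⟩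
  intro h
  have : i.castSucc = i.succ := congrArg Prod.fst h
  have := congrArg Fin.val this
  simp at this

lemma qk_adj_chord0 : (Qk k).Adj (0, 0) (0, (2:Fin 4)) := by
  refine ⟨?_, Or.inl (Or.inr (Or.inr (Or.inl ⟨by simp, by simp, rfl, rfl⟩)))⟩
  intro h
  have : (0:Fin 4) = 2 := congrArg Prod.snd h
  exact absurd this (by decide)

lemma qk_adj_chordLast : (Qk k).Adj (Fin.last (k+1), 0) (Fin.last (k+1), (2:Fin 4)) := by
  refine ⟨?_, Or.inl (Or.inr (Or.inr (Or.inr ⟨by simp, by simp, rfl, rfl⟩)))⟩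
  intro h
  have : (0:Fin 4) = 2 := congrArg Prod.snd h
  exact absurd this (by decide)

section Extraction

variable {f : Fin (k+2) × Fin 4 → Fin 4} (hf : IsProperColoring (Qk k) f)

include hf

lemma hring (i : Fin (k+2)) : ∀ j, Lay f i (j+1) ≠ Lay f i j :=
  fun j => (hf (qk_adj_ring i j)).symm

lemma hHyp (i : Fin (k+1)) : Hyp (Lay f i.castSucc) (Lay f i.succ) := by
  refine ⟨hring hf _, hring hf _, fun j => ⟨(hf (qk_adj_step1 i j)).symm, ?_⟩⟩
  have := (hf (qk_adj_step2 i (j-1))).symm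
  simpa [Lay] using this

lemma hchord0 : Lay f 0 0 ≠ Lay f 0 2 := hf qk_adj_chord0

lemma hchordLast : Lay f (Fin.last (k+1)) 0 ≠ Lay f (Fin.last (k+1)) 2 := hf qk_adj_chordLast

/-! ### Dichotomy -/

lemma not_twoCol (i : Fin (k+2)) : ¬ TwoCol (Lay f i) := by
  induction i using Fin.induction with
  | zero => exact fun h => hchord0 hf h.1
  | succ i ih => exact fun h => ih (L4 _ _ (hHyp hf i) h)

def Rainbow (f : Fin (k+2) × Fin 4 → Fin 4) : Prop := ∀ i, Function.Injective (Lay f i)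

lemma dichotomy : Rainbow f ∨ ∀ i, ¬ Function.Injective (Lay f i) := by
  by_cases h0 : Function.Injective (Lay f 0)
  · left
    intro i
    induction i using Fin.induction with
    | zero => exact h0
    | succ i ih => exact (L1 _ _ (hHyp hf i)).mp ih
  · right
    intro i
    induction i using Fin.induction with
    | zero => exact h0
    | succ i ih => exact fun h => ih ((L1 _ _ (hHyp hf i)).mpr h)

end Extraction

/-! ### Rainbow theory -/

def Good (s : Fin (k+1) → Fin 4) : Prop := ∀ i, s i = 1 ∨ s i = 2

def IsShift (f : Fin (k+2) × Fin 4 → Fin 4) (s : Fin (k+1) → Fin 4) : Prop :=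
  ∀ (i : Fin (k+1)) (j : Fin 4), Lay f i.succ j = Lay f i.castSucc (j + s i)

lemma exists_shift {f : Fin (k+2) × Fin 4 → Fin 4} (hf : IsProperColoring (Qk k) f)
    (hR : Rainbow f) : ∃ s, Good s ∧ IsShift f s := by
  classical
  refine ⟨fun i => if (∀ j, Lay f i.succ j = Lay f i.castSucc (j+1)) then 1 else 2, fun i => ?_, fun i j => ?_⟩
  · by_cases h : (∀ j, Lay f i.succ j = Lay f i.castSucc (j+1)) <;> simp [h]
  · by_cases h : (∀ j, Lay f i.succ j = Lay f i.castSucc (j+1))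
    · simpa [h] using h j
    · have := (L3 _ _ (hHyp hf i) (hR i.castSucc)).resolve_left h
      simpa [h] using this j

lemma shift_unique {f : Fin (k+2) × Fin 4 → Fin 4} (hR : Rainbow f)
    {s s' : Fin (k+1) → Fin 4} (h : IsShift f s) (h' : IsShift f s') : s = s' := by
  funext i
  have := (h i 0).symm.trans (h' i 0)
  have := hR i.castSucc this
  simpa using this

def DiagS (p : Fin (k+2) → Fin 4) : Set (Fin (k+2) × Fin 4) := {v | v.2 = p v.1}

noncomputable def pinv (f : Fin (k+2) × Fin 4 → Fin 4) (c : Fin 4) (i : Fin (k+2)) : Fin 4 :=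
  Function.invFun (Lay f i) c

lemma lay_pinv {f : Fin (k+2) × Fin 4 → Fin 4} (hR : Rainbow f) (c : Fin 4) (i : Fin (k+2)) :
    Lay f i (pinv f c i) = c := by
  have hs : Function.Surjective (Lay f i) := Finite.surjective_of_injective (hR i)
  exact Function.invFun_eq (hs c)

lemma rainbow_class {f : Fin (k+2) × Fin 4 → Fin 4} (hR : Rainbow f) (c : Fin 4) :
    f ⁻¹' {c} = DiagS (pinv f c) := by
  ext ⟨i, j⟩
  constructor
  · intro h
    exact (hR i (show Lay f i j = Lay f i (pinv f c i) from h.trans (lay_pinv hR c i).symm))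
  · intro h
    have : f (i, j) = Lay f i (pinv f c i) := by
      show Lay f i j = _
      rw [show j = pinv f c i from h]
    simpa [lay_pinv hR c i] using this

lemma pinv_step {f : Fin (k+2) × Fin 4 → Fin 4} (hR : Rainbow f) {s : Fin (k+1) → Fin 4}
    (hS : IsShift f s) (c : Fin 4) (i : Fin (k+1)) :
    pinv f c i.succ = pinv f c i.castSucc - s i := by
  apply hR i.succ
  rw [lay_pinv hR c i.succ, hS i, sub_add_cancel, lay_pinv hR c i.castSucc]

/-! ### Degenerate theory -/

def tau (f : Fin (k+2) × Fin 4 → Fin 4) (i : Fin (k+2)) : Bool :=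
  decide (Lay f i 0 = Lay f i 2)

def one' (k : ℕ) : Fin (k+2) := (0 : Fin (k+1)).succ

noncomputable def zc (f : Fin (k+2) × Fin 4 → Fin 4) : Fin 4 := Lay f 0 1

noncomputable def wc (f : Fin (k+2) × Fin 4 → Fin 4) : Fin 4 :=
  Lay f (one' k) (if tau f (one' k) then 0 else 1)

lemma odj_pos : ∀ t : Bool, ¬ odj t (if t then 1 else 0) ∧ ¬ odj t (if t then 3 else 2) ∧
    odj t (if t then 0 else 1) ∧ odj t (if t then 2 else 3) := by decide

lemma diag_pos_ne : ∀ t : Bool, (if t then (1:Fin 4) else 0) ≠ (if t then 3 else 2) := by decide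

section Deg

variable {f : Fin (k+2) × Fin 4 → Fin 4} (hf : IsProperColoring (Qk k) f)
  (hN : ∀ i, ¬ Function.Injective (Lay f i))

include hf hN

lemma tau0 : tau f 0 = false := decide_eq_false (hchord0 hf)

lemma tauLast : tau f (Fin.last (k+1)) = false := decide_eq_false (hchordLast hf)

lemma S1' (i : Fin (k+2)) :
    (∀ j j', odj (tau f i) j → odj (tau f i) j' → Lay f i j = Lay f i j') ∧
    (∀ j j', odj (tau f i) j → ¬ odj (tau f i) j' → Lay f i j ≠ Lay f i j') ∧
    (∀ j j', ¬ odj (tau f i) j → ¬ odj (tau f i) j' → j ≠ j' → Lay f i j ≠ Lay f i j') :=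
  S1 (Lay f i) (hring hf i) (hN i) (not_twoCol hf i)

lemma L5' (i : Fin (k+1)) : ∀ j j',
    (odj (tau f i.castSucc) j ∨ odj (tau f i.succ) j') → Lay f i.succ j' ≠ Lay f i.castSucc j :=
  L5 _ _ (hHyp hf i) (hN _) (not_twoCol hf _) (not_twoCol hf _)

lemma wc_ne_layer0 : ∀ j, wc f ≠ Lay f 0 j := by
  intro j
  have h := L5' hf hN 0 j (if tau f (one' k) then 0 else 1)
  rw [Fin.castSucc_zero] at h
  exact h (Or.inr ((odj_pos (tau f (one' k))).2.2.1))

lemma zc_ne_wc : zc f ≠ wc f := (wc_ne_layer0 hf hN 1).symm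

def DegInv (f : Fin (k+2) × Fin 4 → Fin 4) (i : Fin (k+2)) : Prop :=
  (∀ j, odj (tau f i) j → Lay f i j = (if Even (i:ℕ) then zc f else wc f)) ∧
  (∀ j, ¬ odj (tau f i) j → Lay f i j ≠ zc f ∧ Lay f i j ≠ wc f)

lemma degInv_all (i : Fin (k+2)) : DegInv f i := by
  induction i using Fin.induction with
  | zero =>
    constructor
    · intro j hj
      have t0 := tau0 hf hN
      rw [t0] at hj
      have : Lay f 0 j = Lay f 0 1 := by
        refine (S1' hf hN 0).1 j 1 (by rw [t0]; exact hj) (by rw [t0]; exact Or.inl rfl)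
      simpa [zc] using this
    · intro j hj
      refine ⟨?_, (wc_ne_layer0 hf hN j).symm⟩
      have t0 := tau0 hf hN
      exact ((S1' hf hN 0).2.1 1 j (by rw [t0]; exact Or.inl rfl) hj).symm
  | succ i ih =>
    have hpar : Even ((i.succ : ℕ)) ↔ ¬ Even ((i.castSucc : ℕ)) := by
      simp [Fin.val_succ, Fin.coe_castSucc, Nat.even_add_one]
    set t := tau f i.castSucc with ht
    set t' := tau f i.succ with ht'
    -- a's data
    have hja : Lay f i.castSucc (if t then 0 else 1)
        = (if Even ((i.castSucc:ℕ)) then zc f else wc f) :=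
      ih.1 _ (odj_pos t).2.2.1
    have hu := ih.2 (if t then 1 else 0) (odj_pos t).1
    have hv := ih.2 (if t then 3 else 2) (odj_pos t).2.1
    have huv : Lay f i.castSucc (if t then 1 else 0) ≠ Lay f i.castSucc (if t then 3 else 2) :=
      (S1' hf hN i.castSucc).2.2 _ _ (odj_pos t).1 (odj_pos t).2.1 (diag_pos_ne t)
    have hzw := zc_ne_wc hf hN
    have key : ∀ j', odj t' j' →
        Lay f i.succ j' = (if Even ((i.succ:ℕ)) then zc f else wc f) := by
      intro j' hj'
      have h1 : Lay f i.succ j' ≠ Lay f i.castSucc (if t then 1 else 0) :=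
        L5' hf hN i _ _ (Or.inr hj')
      have h2 : Lay f i.succ j' ≠ Lay f i.castSucc (if t then 3 else 2) :=
        L5' hf hN i _ _ (Or.inr hj')
      have h3 : Lay f i.succ j' ≠ Lay f i.castSucc (if t then 0 else 1) :=
        L5' hf hN i _ _ (Or.inl (odj_pos t).2.2.1)
      rcases Nat.even_or_odd ((i.castSucc : ℕ)) with he | ho
      · -- a's rep is zc, b's rep should be wc
        rw [if_pos he] at hja
        rw [if_neg (by rw [hpar]; exact fun h => h he)]
        exact four_lemma _ _ _ _ _ huv hu.1 hu.2 hv.1 hv.2 hzw h1 h2 (hja ▸ h3)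
      · have ho' : ¬ Even ((i.castSucc:ℕ)) := Nat.not_even_iff_odd.mpr ho
        rw [if_neg ho'] at hja
        rw [if_pos (hpar.mpr ho')]
        have h4 : Lay f i.succ j' ≠ wc f := hja ▸ h3
        exact four_lemma _ _ _ _ _ huv hu.2 hu.1 hv.2 hv.1 (Ne.symm hzw) h1 h2 h4
    refine ⟨key, ?_⟩
    intro j' hj'
    have hrep : Lay f i.succ j' ≠ Lay f i.castSucc (if t then 0 else 1) :=
      L5' hf hN i _ _ (Or.inl (odj_pos t).2.2.1)
    have hrep' : Lay f i.succ j' ≠ Lay f i.succ (if t' then 0 else 1) :=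
      ((S1' hf hN i.succ).2.1 _ j' (odj_pos t').2.2.1 hj').symm
    have hb := key _ (odj_pos t').2.2.1
    rw [hb] at hrep'
    rcases Nat.even_or_odd ((i.castSucc : ℕ)) with he | ho
    · rw [if_pos he] at hja
      rw [if_neg (by rw [hpar]; exact fun h => h he)] at hrep'
      exact ⟨hja ▸ hrep, hrep'⟩
    · have ho' : ¬ Even ((i.castSucc:ℕ)) := Nat.not_even_iff_odd.mpr ho
      rw [if_neg ho'] at hja
      rw [if_pos (hpar.mpr ho')] at hrep'
      exact ⟨hrep', hja ▸ hrep⟩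

def Eset (τ : Fin (k+2) → Bool) : Set (Fin (k+2) × Fin 4) :=
  {v | Even ((v.1:ℕ)) ∧ odj (τ v.1) v.2}

def Oset (τ : Fin (k+2) → Bool) : Set (Fin (k+2) × Fin 4) :=
  {v | ¬ Even ((v.1:ℕ)) ∧ odj (τ v.1) v.2}

lemma deg_zclass : f ⁻¹' {zc f} = Eset (tau f) := by
  ext ⟨i, j⟩
  have hI := degInv_all hf hN i
  simp only [Set.mem_preimage, Set.mem_singleton_iff, Eset, Set.mem_setOf_eq]
  constructor
  · intro h
    by_cases hj : odj (tau f i) j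
    · have := hI.1 j hj
      rcases Nat.even_or_odd ((i:ℕ)) with he | ho
      · exact ⟨he, hj⟩
      · rw [if_neg (Nat.not_even_iff_odd.mpr ho)] at this
        exact absurd (this.symm.trans (show Lay f i j = zc f from h)).symm (zc_ne_wc hf hN)
    · exact absurd h (hI.2 j hj).1
  · rintro ⟨he, hj⟩
    have := hI.1 j hj
    rw [if_pos he] at this
    exact this

lemma deg_wclass : f ⁻¹' {wc f} = Oset (tau f) := by
  ext ⟨i, j⟩
  have hI := degInv_all hf hN i
  simp only [Set.mem_preimage, Set.mem_singleton_iff, Oset, Set.mem_setOf_eq]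
  constructor
  · intro h
    by_cases hj : odj (tau f i) j
    · have := hI.1 j hj
      rcases Nat.even_or_odd ((i:ℕ)) with he | ho
      · rw [if_pos he] at this
        exact absurd ((this.symm.trans (show Lay f i j = wc f from h))) (zc_ne_wc hf hN)
      · exact ⟨Nat.not_even_iff_odd.mpr ho, hj⟩
    · exact absurd h (hI.2 j hj).2
  · rintro ⟨he, hj⟩
    have := hI.1 j hj
    rw [if_neg he] at this
    exact this

lemma deg_diag_parity {c' : Fin 4} {p : Fin (k+2) → Fin 4}
    (hcl : f ⁻¹' {c'} = DiagS p) (i : Fin (k+2)) :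
    ((p i : ℕ)) % 2 = (if tau f i then 1 else 0) := by
  have hmem : f (i, p i) = c' := by
    have : (i, p i) ∈ DiagS p := rfl
    rw [← hcl] at this
    exact this
  by_cases hj : odj (tau f i) (p i)
  · exfalso
    set o1 := (if tau f i then (0:Fin 4) else 1)
    set o2 := (if tau f i then (2:Fin 4) else 3)
    have e1 : Lay f i o1 = Lay f i (p i) := (S1' hf hN i).1 _ _ (odj_pos _).2.2.1 hj
    have e2 : Lay f i o2 = Lay f i (p i) := (S1' hf hN i).1 _ _ (odj_pos _).2.2.2 hj
    have m1 : (i, o1) ∈ f ⁻¹' {c'} := by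
      simp only [Set.mem_preimage, Set.mem_singleton_iff]
      exact e1.trans hmem
    have m2 : (i, o2) ∈ f ⁻¹' {c'} := by
      simp only [Set.mem_preimage, Set.mem_singleton_iff]
      exact e2.trans hmem
    rw [hcl] at m1 m2
    have : o1 = o2 := (show o1 = p i from m1).trans (show o2 = p i from m2).symm
    exact odj_ne_odj (tau f i) this
  · exact not_odj_val _ _ hj

def OddSum (s : Fin (k+1) → Fin 4) : Prop := (∑ i, (((s i : ℕ)) : ZMod 2)) = 1

lemma deg_no_oddDiag {p : Fin (k+2) → Fin 4} {s : Fin (k+1) → Fin 4}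
    (hodd : OddSum s) (hstep : ∀ i : Fin (k+1), p i.succ = p i.castSucc - s i)
    {c' : Fin 4} (hcl : f ⁻¹' {c'} = DiagS p) : False := by
  have hpar : ∀ i : Fin (k+2), (((p i : ℕ)) : ZMod 2) = (if tau f i then 1 else 0) := by
    intro i
    have := deg_diag_parity hf hN hcl i
    calc (((p i : ℕ)) : ZMod 2) = ((((p i : ℕ)) % 2 : ℕ) : ZMod 2) := (ZMod.natCast_mod _ 2).symm
    _ = (((if tau f i then 1 else 0) : ℕ) : ZMod 2) := by rw [this]
    _ = (if tau f i then 1 else 0) := by cases tau f i <;> simp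
  set g : ℕ → ZMod 2 := fun n => if h : n < k+2 then (if tau f ⟨n, h⟩ then 1 else 0) else 0 with hg
  have hterm : ∀ i : Fin (k+1), (((s i : ℕ)) : ZMod 2) = g (i : ℕ) - g ((i : ℕ) + 1) := by
    intro i
    have h1 : (((p i.succ : ℕ)) : ZMod 2) = (((p i.castSucc : ℕ)) : ZMod 2) - (((s i : ℕ)) : ZMod 2) := by
      rw [hstep i, phi_sub]
    have hc : g (i : ℕ) = (((p i.castSucc : ℕ)) : ZMod 2) := by
      rw [hpar i.castSucc, hg]
      have hlt : (i : ℕ) < k + 2 := lt_of_lt_of_le i.isLt (by omega)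
      simp only [dif_pos hlt]
      congr 1
    have hs : g ((i : ℕ) + 1) = (((p i.succ : ℕ)) : ZMod 2) := by
      rw [hpar i.succ, hg]
      have hlt : (i : ℕ) + 1 < k + 2 := by omega
      simp only [dif_pos hlt]
      congr 1
    rw [hc, hs, h1]
    ring
  have hsum : (∑ i : Fin (k+1), (((s i : ℕ)) : ZMod 2)) = g 0 - g (k+1) := by
    calc (∑ i : Fin (k+1), (((s i : ℕ)) : ZMod 2))
        = ∑ i : Fin (k+1), (g (i:ℕ) - g ((i:ℕ)+1)) := Finset.sum_congr rfl (fun i _ => hterm i)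
      _ = ∑ n ∈ Finset.range (k+1), (g n - g (n+1)) :=
          Fin.sum_univ_eq_sum_range (fun n => g n - g (n+1)) (k+1)
      _ = g 0 - g (k+1) := Finset.sum_range_sub' g (k+1)
  have hg0 : g 0 = 0 := by
    rw [hg]
    simp only [dif_pos (by omega : 0 < k+2)]
    have : (⟨0, by omega⟩ : Fin (k+2)) = 0 := rfl
    rw [this, tau0 hf hN]
    simp
  have hgl : g (k+1) = 0 := by
    rw [hg]
    simp only [dif_pos (by omega : k+1 < k+2)]
    have : (⟨k+1, by omega⟩ : Fin (k+2)) = Fin.last (k+1) := rfl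
    rw [this, tauLast hf hN]
    simp
  replace hodd : (∑ i, (((s i : ℕ)) : ZMod 2)) = 1 := hodd
  rw [hsum, hg0, hgl] at hodd
  simp at hodd

end Deg

/-! ### Explicit colorings -/

lemma proper_of_rel {F : Fin (k+2) × Fin 4 → Fin 4}
    (h : ∀ u v, qkRel k u v → F u ≠ F v) : IsProperColoring (Qk k) F := by
  intro u v hadj
  rcases hadj with ⟨hne, h1 | h1⟩
  · exact h u v h1
  · exact (h v u h1).symm

section RainbowExplicit

variable (s : Fin (k+1) → Fin 4)

def sext : ℕ → Fin 4 := fun n => if h : n < k+1 then s ⟨n, h⟩ else 1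

def cum : ℕ → Fin 4
  | 0 => 0
  | n+1 => cum n + sext s n

def fR : Fin (k+2) × Fin 4 → Fin 4 := fun v => v.2 + cum s (v.1 : ℕ)

lemma D4ring : ∀ a c : Fin 4, a + 1 + c ≠ a + c := by decide
lemma D4a : ∀ a c d : Fin 4, (d = 1 ∨ d = 2) → a + (c + d) ≠ a + c := by decide
lemma D4b : ∀ a c d : Fin 4, (d = 1 ∨ d = 2) → a + 1 + (c + d) ≠ a + c := by decide
lemma D4c : ∀ c : Fin 4, (0:Fin 4) + c ≠ 2 + c := by decide

lemma sext_good (hG : Good s) (n : ℕ) (hn : n < k+1) : sext s n = 1 ∨ sext s n = 2 := by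
  rw [sext, dif_pos hn]; exact hG _

lemma fR_proper (hG : Good s) : IsProperColoring (Qk k) (fR s) := by
  apply proper_of_rel
  rintro ⟨i, x⟩ ⟨i', y⟩ hrel
  rcases hrel with ⟨h1, h2⟩ | ⟨h1, h2⟩ | ⟨h1, h2, h3, h4⟩ | ⟨h1, h2, h3, h4⟩ <;>
    simp only [fR] at *
  · subst h1; subst h2; exact (D4ring x (cum s i)).symm
  · rw [h1, cum]
    have hd := sext_good s hG i (by omega)
    rcases h2 with h2 | h2 <;> rw [h2]
    · exact (D4a x (cum s i) _ hd).symm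
    · exact (D4b x (cum s i) _ hd).symm
  · subst h3; subst h4; rw [h1, h2]; exact D4c _
  · subst h3; subst h4; rw [h1, h2]; exact D4c _

lemma fR_lay (i : Fin (k+2)) (j : Fin 4) : Lay (fR s) i j = j + cum s (i:ℕ) := rfl

lemma fR_rainbow : Rainbow (fR s) := by
  intro i j j' h
  rw [fR_lay, fR_lay] at h
  exact add_right_cancel h

lemma fR_shift (hG : Good s) : IsShift (fR s) s := by
  intro i j
  rw [fR_lay, fR_lay, Fin.val_succ, Fin.coe_castSucc, cum]
  have : sext s (i:ℕ) = s i := by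
    rw [sext, dif_pos i.isLt]
  rw [this]
  abel

end RainbowExplicit

section DegExplicit

def layM (p r j : Fin 4) : Fin 4 := if j = p then 0 else if j = p + 2 then 2 else r

variable (τ : Fin (k+2) → Bool)

def text : ℕ → Bool := fun n => if h : n < k+2 then τ ⟨n, h⟩ else false

def dcum : ℕ → Fin 4
  | 0 => 0
  | n+1 => dcum n - (if text τ n = text τ (n+1) then 2 else 1)

def gD : Fin (k+2) × Fin 4 → Fin 4 :=
  fun v => layM (dcum τ (v.1:ℕ)) (if Even ((v.1:ℕ)) then 1 else 3) v.2

lemma parity_step : ∀ x : Fin 4, (((x - 2 : Fin 4) : ℕ) % 2 = ((x:ℕ)) % 2) ∧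
    (((x - 1 : Fin 4) : ℕ) % 2 = 1 - ((x:ℕ)) % 2) := by decide

lemma dcum_parity (hb0 : τ 0 = false) (n : ℕ) (hn : n < k + 2) :
    ((dcum τ n : ℕ)) % 2 = (if text τ n then 1 else 0) := by
  induction n with
  | zero =>
    have : text τ 0 = false := by rw [text, dif_pos (by omega : 0 < k+2)]; exact hb0
    rw [this]; rfl
  | succ n ih =>
    have ihn := ih (by omega)
    rw [dcum]
    by_cases h : text τ n = text τ (n+1)
    · rw [if_pos h, (parity_step _).1, ihn, ← h]
    · rw [if_neg h, (parity_step _).2, ihn]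
      cases hn1 : text τ n <;> cases hn2 : text τ (n+1) <;>
        simp [hn1, hn2] at h ⊢ <;> omega

lemma R1 : ∀ p r j : Fin 4, (r = 1 ∨ r = 3) → layM p r (j+1) ≠ layM p r j := by decide

lemma R2 : ∀ p r r' d j : Fin 4, ((r = 1 ∧ r' = 3) ∨ (r = 3 ∧ r' = 1)) → (d = 1 ∨ d = 2) →
    layM (p - d) r' j ≠ layM p r j ∧ layM (p - d) r' (j+1) ≠ layM p r j := by decide

lemma R3 : ∀ p r : Fin 4, ((p:ℕ)) % 2 = 0 → (r = 1 ∨ r = 3) → layM p r 0 ≠ layM p r 2 := by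
  decide

lemma rEven (n : ℕ) : (if Even n then (1:Fin 4) else 3) = 1 ∨ (if Even n then (1:Fin 4) else 3) = 3 := by
  by_cases h : Even n <;> simp [h]

lemma gD_proper (hb0 : τ 0 = false) (hbl : τ (Fin.last (k+1)) = false) :
    IsProperColoring (Qk k) (gD τ) := by
  apply proper_of_rel
  rintro ⟨i, x⟩ ⟨i', y⟩ hrel
  rcases hrel with ⟨h1, h2⟩ | ⟨h1, h2⟩ | ⟨h1, h2, h3, h4⟩ | ⟨h1, h2, h3, h4⟩ <;>
    simp only [gD] at *
  · subst h1; subst h2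
    exact (R1 _ _ x (rEven _)).symm
  · rw [h1, dcum]
    have hd : (if text τ (i:ℕ) = text τ ((i:ℕ)+1) then (2:Fin 4) else 1) = 1 ∨
        (if text τ (i:ℕ) = text τ ((i:ℕ)+1) then (2:Fin 4) else 1) = 2 := by
      by_cases h : text τ (i:ℕ) = text τ ((i:ℕ)+1) <;> simp [h]
    have halt : ((if Even ((i:ℕ)) then (1:Fin 4) else 3) = 1 ∧
          (if Even (((i:ℕ))+1) then (1:Fin 4) else 3) = 3) ∨
        ((if Even ((i:ℕ)) then (1:Fin 4) else 3) = 3 ∧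
          (if Even (((i:ℕ))+1) then (1:Fin 4) else 3) = 1) := by
      by_cases h : Even ((i:ℕ))
      · left; simp [h, Nat.even_add_one]
      · right; simp [h, Nat.even_add_one]
    have := R2 (dcum τ (i:ℕ)) _ _ _ x halt hd
    rcases h2 with h2 | h2 <;> rw [h2]
    · exact this.1.symm
    · exact this.2.symm
  · subst h3; subst h4
    rw [h1, h2]
    show layM (dcum τ 0) (if Even 0 then 1 else 3) 0 ≠ layM (dcum τ 0) (if Even 0 then 1 else 3) 2
    rw [show dcum τ 0 = 0 from rfl]
    decide
  · subst h3; subst h4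
    rw [h1, h2]
    apply R3
    · rw [dcum_parity τ hb0 (k+1) (by omega)]
      have : text τ (k+1) = false := by
        rw [text, dif_pos (by omega : k+1 < k+2)]
        exact hbl
      rw [this]
      rfl
    · exact rEven _

lemma gD_lay (i : Fin (k+2)) (j : Fin 4) :
    Lay (gD τ) i j = layM (dcum τ (i:ℕ)) (if Even ((i:ℕ)) then 1 else 3) j := rfl

lemma gLayM0 : ∀ p r j : Fin 4, (r = 1 ∨ r = 3) → (layM p r j = 0 ↔ j = p) := by decide
lemma gLayM1 : ∀ p r j : Fin 4, (r = 1 ∨ r = 3) →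
    (layM p r j = 1 ↔ (r = 1 ∧ j ≠ p ∧ j ≠ p + 2)) := by decide
lemma gLayM3 : ∀ p r j : Fin 4, (r = 1 ∨ r = 3) →
    (layM p r j = 3 ↔ (r = 3 ∧ j ≠ p ∧ j ≠ p + 2)) := by decide

lemma gD_class0 : (gD τ) ⁻¹' {0} = DiagS (fun i => dcum τ (i:ℕ)) := by
  ext ⟨i, j⟩
  simp only [Set.mem_preimage, Set.mem_singleton_iff, DiagS, Set.mem_setOf_eq]
  exact gLayM0 _ _ _ (rEven _)

lemma gD_odj_iff (hb0 : τ 0 = false) (i : Fin (k+2)) (j : Fin 4) :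
    odj (τ i) j ↔ (j ≠ dcum τ (i:ℕ) ∧ j ≠ dcum τ (i:ℕ) + 2) := by
  apply odj_iff_ne
  rw [dcum_parity τ hb0 (i:ℕ) i.isLt]
  have : text τ (i:ℕ) = τ i := by rw [text, dif_pos i.isLt]
  rw [this]

lemma gD_class1 (hb0 : τ 0 = false) : (gD τ) ⁻¹' {1} = Eset τ := by
  ext ⟨i, j⟩
  simp only [Set.mem_preimage, Set.mem_singleton_iff, Eset, Set.mem_setOf_eq]
  rw [show gD τ (i, j) = layM (dcum τ (i:ℕ)) (if Even ((i:ℕ)) then 1 else 3) j from rfl,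
    gLayM1 _ _ _ (rEven _), gD_odj_iff τ hb0 i j]
  by_cases h : Even ((i:ℕ)) <;> simp [h]

lemma gD_class3 (hb0 : τ 0 = false) : (gD τ) ⁻¹' {3} = Oset τ := by
  ext ⟨i, j⟩
  simp only [Set.mem_preimage, Set.mem_singleton_iff, Oset, Set.mem_setOf_eq]
  rw [show gD τ (i, j) = layM (dcum τ (i:ℕ)) (if Even ((i:ℕ)) then 1 else 3) j from rfl,
    gLayM3 _ _ _ (rEven _), gD_odj_iff τ hb0 i j]
  by_cases h : Even ((i:ℕ)) <;> simp [h]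

lemma gD_not_rainbow : ¬ Rainbow (gD τ) := by
  intro h
  have h0 := h 0
  have e1 : Lay (gD τ) 0 1 = Lay (gD τ) 0 3 := by
    rw [gD_lay, gD_lay]
    rw [show ((0 : Fin (k+2)):ℕ) = 0 from rfl, show dcum τ 0 = 0 from rfl]
    decide
  have := h0 e1
  exact absurd this (by decide)

end DegExplicit

/-! ### The invariant Φ -/

def SOdd (k : ℕ) := {s : Fin (k+1) → Fin 4 // Good s ∧ OddSum s}

open Classical in
noncomputable def phi (f : Fin (k+2) × Fin 4 → Fin 4) : Option (SOdd k) :=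
  if h : Rainbow f ∧ ∃ s, (Good s ∧ OddSum s) ∧ IsShift f s
  then some ⟨h.2.choose, h.2.choose_spec.1⟩ else none

lemma phi_eq_some {f : Fin (k+2) × Fin 4 → Fin 4} {s : Fin (k+1) → Fin 4}
    (hR : Rainbow f) (hS : IsShift f s) (hG : Good s) (hO : OddSum s) :
    phi f = some ⟨s, hG, hO⟩ := by
  have h : Rainbow f ∧ ∃ s, (Good s ∧ OddSum s) ∧ IsShift f s := ⟨hR, s, ⟨hG, hO⟩, hS⟩
  rw [phi, dif_pos h]
  congr 1
  exact Subtype.ext (shift_unique hR h.2.choose_spec.2 hS)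

lemma phi_some_elim {f : Fin (k+2) × Fin 4 → Fin 4} {σ : SOdd k}
    (h : phi f = some σ) : Rainbow f ∧ IsShift f σ.1 := by
  rw [phi] at h
  split at h
  · rename_i h'
    cases h
    exact ⟨h'.1, h'.2.choose_spec.2⟩
  · exact absurd h (by simp)

lemma phi_none {f : Fin (k+2) × Fin 4 → Fin 4} (h : ¬ Rainbow f) : phi f = none := by
  rw [phi, dif_neg]
  tauto

lemma diagS_inj {p q : Fin (k+2) → Fin 4} (h : DiagS p = DiagS q) : p = q := by
  funext i
  have : (i, p i) ∈ DiagS q := h ▸ (rfl : (i, p i) ∈ DiagS p)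
  exact this

lemma inv_key {f g : Fin (k+2) × Fin 4 → Fin 4}
    (hf : IsProperColoring (Qk k) f) (hg : IsProperColoring (Qk k) g) {c c' : Fin 4}
    (hcl : f ⁻¹' {c} = g ⁻¹' {c'}) {σ : SOdd k} (hφ : phi f = some σ) : phi g = some σ := by
  obtain ⟨hR, hS⟩ := phi_some_elim hφ
  have hclD : g ⁻¹' {c'} = DiagS (pinv f c) := by rw [← hcl, rainbow_class hR]
  rcases dichotomy hg with hRg | hNg
  · obtain ⟨sg, hGg, hSg⟩ := exists_shift hg hRg
    have hclg : g ⁻¹' {c'} = DiagS (pinv g c') := rainbow_class hRg c'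
    have hpq : pinv g c' = pinv f c := diagS_inj (hclg.symm.trans hclD)
    have hseq : sg = σ.1 := by
      funext i
      have h1 := pinv_step hRg hSg c' i
      have h2 := pinv_step hR hS c i
      rw [hpq] at h1
      have := h1.symm.trans h2
      exact sub_right_inj.mp this
    rw [phi_eq_some hRg hSg hGg (hseq ▸ σ.2.2)]
    congr 1
    exact Subtype.ext hseq
  · exact absurd hclD (fun h => deg_no_oddDiag hg hNg σ.2.2
      (fun i => pinv_step hR hS c i) h)

lemma inv_shared {f g : Fin (k+2) × Fin 4 → Fin 4}
    (hf : IsProperColoring (Qk k) f) (hg : IsProperColoring (Qk k) g) {c c' : Fin 4}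
    (hcl : f ⁻¹' {c} = g ⁻¹' {c'}) : phi f = phi g := by
  cases hφf : phi f with
  | some σ => exact (inv_key hf hg hcl hφf).symm
  | none =>
    cases hφg : phi g with
    | some σ => exact absurd ((inv_key hg hf hcl.symm hφg).symm.trans hφf) (by simp)
    | none => rfl

/-! ### Link lemmas: every `phi = none` coloring shares a class with some `gD τ` -/

lemma zmod2_flip : ∀ x : ZMod 2, decide (x = 1) ≠ decide (x + 1 = 1) := by decide

def pz (s : Fin (k+1) → Fin 4) : ℕ → ZMod 2 :=
  fun n => ∑ t ∈ Finset.range n, (((sext s t : ℕ)) : ZMod 2)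

def tauOf (s : Fin (k+1) → Fin 4) : Fin (k+2) → Bool := fun i => decide (pz s (i:ℕ) = 1)

lemma tauOf_zero (s : Fin (k+1) → Fin 4) : tauOf s 0 = false := by
  rw [tauOf]
  have : pz s ((0:Fin (k+2)):ℕ) = 0 := by rw [show ((0:Fin (k+2)):ℕ) = 0 from rfl, pz]; simp
  rw [this]
  simp

lemma tauOf_last {s : Fin (k+1) → Fin 4} (hNO : ¬ OddSum s) :
    tauOf s (Fin.last (k+1)) = false := by
  rw [tauOf]
  have hsum : pz s ((Fin.last (k+1) : ℕ)) = ∑ i : Fin (k+1), (((s i : ℕ)) : ZMod 2) := by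
    rw [Fin.val_last, pz, ← Fin.sum_univ_eq_sum_range (fun n => (((sext s n : ℕ)) : ZMod 2))]
    refine Finset.sum_congr rfl fun i _ => ?_
    rw [sext, dif_pos i.isLt, Fin.eta]
  rw [hsum]
  simpa [OddSum] using hNO

lemma text_tauOf (s : Fin (k+1) → Fin 4) (n : ℕ) (hn : n < k+2) :
    text (tauOf s) n = decide (pz s n = 1) := by
  rw [text, dif_pos hn, tauOf]

lemma dstep_tauOf {s : Fin (k+1) → Fin 4} (hG : Good s) (n : ℕ) (hn : n < k+1) :
    (if text (tauOf s) n = text (tauOf s) (n+1) then (2:Fin 4) else 1) = sext s n := by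
  rw [text_tauOf s n (by omega), text_tauOf s (n+1) (by omega)]
  have hrec : pz s (n+1) = pz s n + (((sext s n : ℕ)) : ZMod 2) := Finset.sum_range_succ _ n
  rcases sext_good s hG n hn with h | h
  · rw [h] at hrec ⊢
    rw [phi_one] at hrec
    rw [if_neg]
    rw [hrec]
    exact zmod2_flip (pz s n)
  · rw [h] at hrec ⊢
    rw [phi_two, add_zero] at hrec
    rw [hrec, if_pos rfl]

lemma pinv_eq_dcum {f : Fin (k+2) × Fin 4 → Fin 4} {s : Fin (k+1) → Fin 4}
    (hR : Rainbow f) (hS : IsShift f s) (hG : Good s) (i : Fin (k+2)) :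
    pinv f (Lay f 0 0) i = dcum (tauOf s) (i:ℕ) := by
  induction i using Fin.induction with
  | zero =>
    have : Lay f 0 (pinv f (Lay f 0 0) 0) = Lay f 0 0 := lay_pinv hR _ 0
    exact hR 0 this
  | succ i ih =>
    rw [pinv_step hR hS _ i, ih, Fin.val_succ, dcum, dstep_tauOf hG (i:ℕ) i.isLt]
    congr 1
    rw [sext, dif_pos i.isLt, Fin.eta]

lemma link_rainbow {f : Fin (k+2) × Fin 4 → Fin 4} {s : Fin (k+1) → Fin 4}
    (hR : Rainbow f) (hS : IsShift f s) (hG : Good s) (hNO : ¬ OddSum s) :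
    f ⁻¹' {Lay f 0 0} = (gD (tauOf s)) ⁻¹' {0} := by
  rw [rainbow_class hR, gD_class0]
  have : pinv f (Lay f 0 0) = fun (i : Fin (k+2)) => dcum (tauOf s) ((i:ℕ)) :=
    funext (pinv_eq_dcum hR hS hG)
  rw [this]

lemma link_deg {f : Fin (k+2) × Fin 4 → Fin 4} (hf : IsProperColoring (Qk k) f)
    (hN : ∀ i, ¬ Function.Injective (Lay f i)) :
    f ⁻¹' {zc f} = (gD (tau f)) ⁻¹' {1} := by
  rw [deg_zclass hf hN, gD_class1 _ (tau0 hf hN)]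

/-! ### Eset/Oset congruence and nonemptiness -/

lemma Eset_congr {τ τ' : Fin (k+2) → Bool} (h : ∀ i : Fin (k+2), Even ((i:ℕ)) → τ i = τ' i) :
    Eset τ = Eset τ' := by
  ext ⟨i, j⟩
  simp only [Eset, Set.mem_setOf_eq]
  constructor
  · rintro ⟨he, hj⟩; exact ⟨he, h i he ▸ hj⟩
  · rintro ⟨he, hj⟩; exact ⟨he, (h i he).symm ▸ hj⟩

lemma Oset_congr {τ τ' : Fin (k+2) → Bool} (h : ∀ i : Fin (k+2), ¬ Even ((i:ℕ)) → τ i = τ' i) :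
    Oset τ = Oset τ' := by
  ext ⟨i, j⟩
  simp only [Oset, Set.mem_setOf_eq]
  constructor
  · rintro ⟨he, hj⟩; exact ⟨he, h i he ▸ hj⟩
  · rintro ⟨he, hj⟩; exact ⟨he, (h i he).symm ▸ hj⟩

lemma Eset_nonempty {τ : Fin (k+2) → Bool} (hb0 : τ 0 = false) : (Eset τ).Nonempty := by
  refine ⟨(0, 1), ?_, ?_⟩
  · simp
  · rw [hb0]; exact Or.inl rfl

lemma Oset_nonempty (τ : Fin (k+2) → Bool) : (Oset τ).Nonempty := by
  refine ⟨(one' k, if τ (one' k) then 0 else 1), ?_, (odj_pos _).2.2.1⟩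
  rw [show ((one' k : Fin (k+2)):ℕ) = 1 by simp [one']]
  simp

lemma DiagS_nonempty (p : Fin (k+2) → Fin 4) : (DiagS p).Nonempty := ⟨(0, p 0), rfl⟩

/-! ### Components of the coloring complex -/

section Final

lemma mem_colorClasses {f : Fin (k+2) × Fin 4 → Fin 4} {c : Fin 4}
    (hf : IsProperColoring (Qk k) f) (hne : (f ⁻¹' {c}).Nonempty) :
    f ⁻¹' {c} ∈ colorClasses (Qk k) := ⟨hne, f, c, hf, rfl⟩

noncomputable def psi (A : colorClasses (Qk k)) : Option (SOdd k) := phi A.2.2.choose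

lemma psi_spec (A : colorClasses (Qk k)) {g : Fin (k+2) × Fin 4 → Fin 4} {c : Fin 4}
    (hg : IsProperColoring (Qk k) g) (hA : (A : Set (Fin (k+2) × Fin 4)) = g ⁻¹' {c}) :
    psi A = phi g := by
  obtain ⟨c0, hf0, hA0⟩ := A.2.2.choose_spec
  exact inv_shared hf0 hg (by rw [← hA0, hA])

lemma psi_adj {A B : colorClasses (Qk k)} (h : (colorComplex (Qk k)).Adj A B) :
    psi A = psi B := by
  rw [colorComplex, SimpleGraph.fromRel_adj] at h
  obtain ⟨hne, h | h⟩ := h <;>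
    obtain ⟨f, hf, ⟨c, hc⟩, ⟨c', hc'⟩⟩ := h
  · rw [psi_spec A hf hc, psi_spec B hf hc']
  · rw [psi_spec A hf hc', psi_spec B hf hc]

lemma psi_walk {A B : colorClasses (Qk k)} (p : (colorComplex (Qk k)).Walk A B) :
    psi A = psi B := by
  induction p with
  | nil => rfl
  | cons h q ih => exact (psi_adj h).trans ih

noncomputable def Psi : (colorComplex (Qk k)).ConnectedComponent → Option (SOdd k) :=
  SimpleGraph.ConnectedComponent.lift psi (fun _ _ p _ => psi_walk p)

lemma reach_of_classes {A B : colorClasses (Qk k)} {f : Fin (k+2) × Fin 4 → Fin 4}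
    (hf : IsProperColoring (Qk k) f) {c c' : Fin 4}
    (hA : (A : Set (Fin (k+2) × Fin 4)) = f ⁻¹' {c})
    (hB : (B : Set (Fin (k+2) × Fin 4)) = f ⁻¹' {c'}) :
    (colorComplex (Qk k)).Reachable A B := by
  by_cases h : A = B
  · rw [h]
  · refine SimpleGraph.Adj.reachable ?_
    rw [colorComplex, SimpleGraph.fromRel_adj]
    exact ⟨h, Or.inl ⟨f, hf, ⟨c, hA⟩, ⟨c', hB⟩⟩⟩

lemma none_link {f : Fin (k+2) × Fin 4 → Fin 4} (hf : IsProperColoring (Qk k) f)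
    (hφ : phi f = none) : ∃ τ : Fin (k+2) → Bool, τ 0 = false ∧ τ (Fin.last (k+1)) = false ∧
      ∃ c c', f ⁻¹' {c} = (gD τ) ⁻¹' {c'} ∧ (f ⁻¹' {c}).Nonempty := by
  rcases dichotomy hf with hR | hN
  · obtain ⟨s, hG, hS⟩ := exists_shift hf hR
    have hNO : ¬ OddSum s := by
      intro hO
      rw [phi_eq_some hR hS hG hO] at hφ
      exact absurd hφ (by simp)
    refine ⟨tauOf s, tauOf_zero s, tauOf_last hNO, Lay f 0 0, 0, link_rainbow hR hS hG hNO, ?_⟩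
    rw [rainbow_class hR]
    exact DiagS_nonempty _
  · refine ⟨tau f, tau0 hf hN, tauLast hf hN, zc f, 1, link_deg hf hN, ?_⟩
    rw [deg_zclass hf hN]
    exact Eset_nonempty (tau0 hf hN)

lemma gD_class1_ne {τ : Fin (k+2) → Bool} (hb0 : τ 0 = false) :
    ((gD τ) ⁻¹' {1} : Set (Fin (k+2) × Fin 4)).Nonempty := by
  rw [gD_class1 τ hb0]; exact Eset_nonempty hb0

lemma gD_class3_ne (τ : Fin (k+2) → Bool) (hb0 : τ 0 = false) :
    ((gD τ) ⁻¹' {3} : Set (Fin (k+2) × Fin 4)).Nonempty := by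
  rw [gD_class3 τ hb0]; exact Oset_nonempty τ

lemma reach_none {A B : colorClasses (Qk k)} {f0 f1 : Fin (k+2) × Fin 4 → Fin 4}
    (hf0 : IsProperColoring (Qk k) f0) (hf1 : IsProperColoring (Qk k) f1)
    {c0 c1 : Fin 4} (hA : (A : Set (Fin (k+2) × Fin 4)) = f0 ⁻¹' {c0})
    (hB : (B : Set (Fin (k+2) × Fin 4)) = f1 ⁻¹' {c1})
    (hφ0 : phi f0 = none) (hφ1 : phi f1 = none) :
    (colorComplex (Qk k)).Reachable A B := by
  obtain ⟨τa, ha0, hal, ca, ca', hlinka, hnea⟩ := none_link hf0 hφ0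
  obtain ⟨τb, hb0, hbl, cb, cb', hlinkb, hneb⟩ := none_link hf1 hφ1
  set mid : Fin (k+2) → Bool := fun i => if Even ((i:ℕ)) then τa i else τb i with hmid
  have hm0 : mid 0 = false := by
    rw [hmid]; simp only []
    rw [if_pos (by simp : Even (((0:Fin (k+2)):ℕ)))]; exact ha0
  have hml : mid (Fin.last (k+1)) = false := by
    rw [hmid]; simp only []
    by_cases h : Even ((Fin.last (k+1) : ℕ))
    · rw [if_pos h]; exact hal
    · rw [if_neg h]; exact hbl
  have hEa : Eset mid = Eset τa := Eset_congr (fun i hi => by rw [hmid]; simp [if_pos hi])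
  have hOb : Oset mid = Oset τb := Oset_congr (fun i hi => by rw [hmid]; simp [if_neg hi])
  -- the intermediate vertices
  have hP1mem : f0 ⁻¹' {ca} ∈ colorClasses (Qk k) := mem_colorClasses hf0 hnea
  have hP2mem : (gD τa) ⁻¹' {1} ∈ colorClasses (Qk k) :=
    mem_colorClasses (gD_proper τa ha0 hal) (gD_class1_ne ha0)
  have hP3mem : (gD mid) ⁻¹' {3} ∈ colorClasses (Qk k) :=
    mem_colorClasses (gD_proper mid hm0 hml) (gD_class3_ne mid hm0)
  have hP4mem : (gD τb) ⁻¹' {cb'} ∈ colorClasses (Qk k) := by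
    rw [← hlinkb]; exact mem_colorClasses hf1 hneb
  set P1 : colorClasses (Qk k) := ⟨_, hP1mem⟩
  set P2 : colorClasses (Qk k) := ⟨_, hP2mem⟩
  set P3 : colorClasses (Qk k) := ⟨_, hP3mem⟩
  set P4 : colorClasses (Qk k) := ⟨_, hP4mem⟩
  have r1 : (colorComplex (Qk k)).Reachable A P1 := reach_of_classes hf0 hA rfl
  have r2 : (colorComplex (Qk k)).Reachable P1 P2 :=
    reach_of_classes (gD_proper τa ha0 hal) (show _ = _ from hlinka) rfl
  have r3 : (colorComplex (Qk k)).Reachable P2 P3 := by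
    refine reach_of_classes (gD_proper mid hm0 hml) (c := 1) ?_ rfl
    show (gD τa) ⁻¹' {1} = (gD mid) ⁻¹' {1}
    rw [gD_class1 τa ha0, gD_class1 mid hm0, hEa]
  have r4 : (colorComplex (Qk k)).Reachable P3 P4 := by
    refine reach_of_classes (gD_proper τb hb0 hbl) (c := 3) ?_ rfl
    show (gD mid) ⁻¹' {3} = (gD τb) ⁻¹' {3}
    rw [gD_class3 mid hm0, gD_class3 τb hb0, hOb]
  have r5 : (colorComplex (Qk k)).Reachable P4 B :=
    reach_of_classes hf1 (show _ = _ from hlinkb.symm) hB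
  exact (((r1.trans r2).trans r3).trans r4).trans r5

lemma pinv_unique {f : Fin (k+2) × Fin 4 → Fin 4} {s : Fin (k+1) → Fin 4}
    (hR : Rainbow f) (hS : IsShift f s) {q : Fin (k+2) → Fin 4}
    (hq0 : q 0 = pinv f (Lay f 0 (q 0)) 0) (hqs : ∀ i : Fin (k+1), q i.succ = q i.castSucc - s i) :
    q = pinv f (Lay f 0 (q 0)) := by
  funext i
  induction i using Fin.induction with
  | zero => exact hq0
  | succ i ih => rw [hqs i, ih, pinv_step hR hS _ i]

lemma reach_some {A B : colorClasses (Qk k)} {f0 f1 : Fin (k+2) × Fin 4 → Fin 4}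
    (hf0 : IsProperColoring (Qk k) f0) (hf1 : IsProperColoring (Qk k) f1)
    {c0 c1 : Fin 4} (hA : (A : Set (Fin (k+2) × Fin 4)) = f0 ⁻¹' {c0})
    (hB : (B : Set (Fin (k+2) × Fin 4)) = f1 ⁻¹' {c1})
    {σ : SOdd k} (hφ0 : phi f0 = some σ) (hφ1 : phi f1 = some σ) :
    (colorComplex (Qk k)).Reachable A B := by
  obtain ⟨hR0, hS0⟩ := phi_some_elim hφ0
  obtain ⟨hR1, hS1⟩ := phi_some_elim hφ1
  set q : Fin (k+2) → Fin 4 := pinv f1 c1 with hq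
  have hq0 : q 0 = pinv f0 (Lay f0 0 (q 0)) 0 :=
    (hR0 0 (lay_pinv hR0 (Lay f0 0 (q 0)) 0)).symm
  have hqs : ∀ i : Fin (k+1), q i.succ = q i.castSucc - σ.1 i := fun i =>
    pinv_step hR1 hS1 c1 i
  have hqeq : q = pinv f0 (Lay f0 0 (q 0)) := pinv_unique hR0 hS0 hq0 hqs
  have h2 : f0 ⁻¹' {Lay f0 0 (q 0)} = DiagS q := by
    rw [rainbow_class hR0, ← hqeq]
  exact reach_of_classes hf0 hA (by rw [hB, rainbow_class hR1, ← hq, ← h2])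

lemma Psi_injective : Function.Injective (Psi (k := k)) := by
  intro C C'
  refine SimpleGraph.ConnectedComponent.ind₂ (fun A B => ?_) C C'
  intro h
  rw [show Psi ((colorComplex (Qk k)).connectedComponentMk A) = psi A from rfl,
    show Psi ((colorComplex (Qk k)).connectedComponentMk B) = psi B from rfl] at h
  obtain ⟨c0, hf0, hA0⟩ := A.2.2.choose_spec
  obtain ⟨c1, hf1, hB1⟩ := B.2.2.choose_spec
  have hpA : psi A = phi A.2.2.choose := rfl
  have hpB : psi B = phi B.2.2.choose := rfl
  apply SimpleGraph.ConnectedComponent.sound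
  cases hφ0 : phi A.2.2.choose with
  | none =>
    have hφ1 : phi B.2.2.choose = none := by rw [← hpB, ← h, hpA, hφ0]
    exact reach_none hf0 hf1 hA0 hB1 hφ0 hφ1
  | some σ =>
    have hφ1 : phi B.2.2.choose = some σ := by rw [← hpB, ← h, hpA, hφ0]
    exact reach_some hf0 hf1 hA0 hB1 hφ0 hφ1

lemma Psi_surjective : Function.Surjective (Psi (k := k)) := by
  intro t
  cases t with
  | none =>
    have hf := gD_proper (k := k) (fun _ => false) rfl rfl
    have hne := gD_class1_ne (k := k) (τ := fun _ => false) rfl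
    set A : colorClasses (Qk k) := ⟨_, mem_colorClasses hf hne⟩ with hAdef
    refine ⟨(colorComplex (Qk k)).connectedComponentMk A, ?_⟩
    have h1 : Psi ((colorComplex (Qk k)).connectedComponentMk A) = psi A := rfl
    rw [h1, psi_spec A hf rfl, phi_none (gD_not_rainbow _)]
  | some σ =>
    have hf := fR_proper σ.1 σ.2.1
    have hR := fR_rainbow (k := k) σ.1
    have hne : ((fR σ.1) ⁻¹' {0} : Set (Fin (k+2) × Fin 4)).Nonempty := by
      rw [rainbow_class hR]; exact DiagS_nonempty _
    set A : colorClasses (Qk k) := ⟨_, mem_colorClasses hf hne⟩ with hAdef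
    refine ⟨(colorComplex (Qk k)).connectedComponentMk A, ?_⟩
    have h1 : Psi ((colorComplex (Qk k)).connectedComponentMk A) = psi A := rfl
    rw [h1, psi_spec A hf rfl, phi_eq_some hR (fR_shift σ.1 σ.2.1) σ.2.1 σ.2.2]
    exact congrArg some (Subtype.ext rfl)

/-! ### Counting -/

lemma zmod2_cases : ∀ x : ZMod 2, x = 0 ∨ x = 1 := by decide

def mkS (c : Fin k → ZMod 2) : Fin (k+1) → Fin 4 :=
  Fin.snoc (fun i => if c i = 1 then 1 else 2) (if (∑ i, c i) = 1 then 2 else 1)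

lemma mkS_cast (c : Fin k → ZMod 2) (i : Fin k) :
    mkS c i.castSucc = if c i = 1 then 1 else 2 := Fin.snoc_castSucc _ _ _

lemma mkS_last (c : Fin k → ZMod 2) :
    mkS c (Fin.last k) = if (∑ i, c i) = 1 then 2 else 1 := Fin.snoc_last _ _

lemma mkS_cast_phi (c : Fin k → ZMod 2) (i : Fin k) :
    (((mkS c i.castSucc : ℕ)) : ZMod 2) = c i := by
  rw [mkS_cast]
  rcases zmod2_cases (c i) with h | h <;> simp only [h] <;> decide

lemma mkS_good (c : Fin k → ZMod 2) : Good (mkS c) := by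
  intro i
  refine Fin.lastCases ?_ (fun i => ?_) i
  · rw [mkS_last]
    by_cases h : (∑ i, c i) = 1 <;> simp [h]
  · rw [mkS_cast]
    by_cases h : c i = 1 <;> simp [h]

lemma mkS_odd (c : Fin k → ZMod 2) : OddSum (mkS c) := by
  rw [OddSum, Fin.sum_univ_castSucc,
    Finset.sum_congr rfl (fun (i : Fin k) _ => mkS_cast_phi c i), mkS_last]
  rcases zmod2_cases (∑ i, c i) with h | h <;> rw [h] <;> decide

noncomputable def soddEquiv : SOdd k ≃ (Fin k → ZMod 2) where
  toFun σ := fun i => (((σ.1 i.castSucc : ℕ)) : ZMod 2)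
  invFun c := ⟨mkS c, mkS_good c, mkS_odd c⟩
  left_inv := by
    rintro ⟨s, hG, hO⟩
    apply Subtype.ext
    simp only []
    funext i
    refine Fin.lastCases ?_ (fun i => ?_) i
    · rw [mkS_last]
      rw [OddSum, Fin.sum_univ_castSucc] at hO
      rcases hG (Fin.last k) with h | h <;> simp only [h] at hO ⊢
      · rw [phi_one] at hO
        have h0 : (∑ i : Fin k, (((s i.castSucc : ℕ)) : ZMod 2)) = 0 := by
          rcases zmod2_cases (∑ i : Fin k, (((s i.castSucc : ℕ)) : ZMod 2)) with h0 | h0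
          · exact h0
          · rw [h0] at hO; exact absurd hO (by decide)
        rw [if_neg (by rw [h0]; decide)]
      · rw [phi_two, add_zero] at hO
        rw [if_pos hO]
    · rw [mkS_cast]
      rcases hG i.castSucc with h | h <;> simp only [h] <;> decide
  right_inv := by
    intro c
    funext i
    exact mkS_cast_phi c i

lemma card_SOdd : Nat.card (SOdd k) = 2 ^ k := by
  rw [Nat.card_congr (soddEquiv (k := k)), Nat.card_fun]
  simp [Nat.card_eq_fintype_card]

instance : Finite (SOdd k) := Finite.of_equiv _ (soddEquiv (k := k)).symm

lemma card_components : Nat.card ((colorComplex (Qk k)).ConnectedComponent) = 2 ^ k + 1 := by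
  rw [Nat.card_eq_of_bijective (Psi (k := k)) ⟨Psi_injective, Psi_surjective⟩,
    Finite.card_option, card_SOdd]

end Final

end QkProof

/-- The 4-coloring complex `B(Q_k)` has exactly `2^k + 1` connected components. -/
theorem card_components_colorComplex_Qk (k : ℕ) :
    Nat.card ((colorComplex (Qk k)).ConnectedComponent) = 2 ^ k + 1 :=
  QkProof.card_components
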